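/- With T as in the Gallant et al. reduction (C ∪ ⋃ A_i as defined), every common superstring of T has length at least 2m + 3n. Consequently, G has a Hamiltonian path from s to t if and only if T has a common superstring of length exactly 2m + 3n. -/

import Mathlib

/-- The alphabet {‡, #, $} ∪ V ∪ W, with all symbols pairwise distinct. -/
abbrev Gam : Type := ℕ ⊕ ℕ ⊕ Fin 3

/-- node symbol v_i -/
def vv (i : ℕ) : Gam := Sum.inl i
/-- auxiliary symbol w_i -/
def ww (i : ℕ) : Gam := Sum.inr (Sum.inl i)
def dag : Gam := Sum.inr (Sum.inr 0)
def hash : Gam := Sum.inr (Sum.inr 1)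
def dollar : Gam := Sum.inr (Sum.inr 2)

lemma infix3 {Q : List Gam} {a b c : Gam} :
    [a,b,c] <:+: Q ↔ ∃ p, Q[p]? = some a ∧ Q[p+1]? = some b ∧ Q[p+2]? = some c := by
  constructor
  · rintro ⟨s, t, rfl⟩
    refine ⟨s.length, ?_, ?_, ?_⟩ <;>
    · rw [List.append_assoc, List.getElem?_append_right (by omega)]
      simp
  · rintro ⟨p, h1, h2, h3⟩
    have ht : (Q.drop p).take 3 = [a,b,c] := by
      apply List.ext_getElem?
      intro k
      rcases k with _|_|_|k <;>
        simp_all [List.getElem?_take, List.getElem?_drop, Nat.add_comm p]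
    rw [← ht]
    exact ((Q.drop p).take_prefix 3).isInfix.trans (Q.drop_suffix p).isInfix

lemma cmod {f : ℕ → ℕ} {d : ℕ} (hd : 0 < d) (hp : ∀ j, f (j + d) = f j) :
    ∀ x, f x = f (x % d) := by
  intro x
  induction x using Nat.strong_induction_on with
  | _ x ih =>
    rcases lt_or_ge x d with h | h
    · rw [Nat.mod_eq_of_lt h]
    · have : x = (x - d) + d := by omega
      rw [this, hp, ih (x - d) (by omega)]
      congr 1
      rw [Nat.add_mod_right]


lemma modsucc_inj {d a b : ℕ} (ha : a < d) (hb : b < d) (h : (a+1) % d = (b+1) % d) : a = b := by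
  have h1 : a + 1 ≤ d := ha
  have h2 : b + 1 ≤ d := hb
  rcases lt_or_eq_of_le h1 with h1 | h1 <;> rcases lt_or_eq_of_le h2 with h2 | h2
  · rw [Nat.mod_eq_of_lt h1, Nat.mod_eq_of_lt h2] at h; omega
  · rw [Nat.mod_eq_of_lt h1, h2, Nat.mod_self] at h; omega
  · rw [Nat.mod_eq_of_lt h2, h1, Nat.mod_self] at h; omega
  · omega

lemma mod_shift_surj {d j0 j : ℕ} (h0 : j0 < d) (hj : j < d) : ∃ r < d, (j0 + r) % d = j := by
  refine ⟨(j + d - j0) % d, Nat.mod_lt _ (by omega), ?_⟩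
  rw [Nat.add_mod_mod]
  have : j0 + (j + d - j0) = j + d := by omega
  rw [this, Nat.add_mod_right, Nat.mod_eq_of_lt hj]


lemma orbit_lemma (N : ℕ) (hN : 1 ≤ N) (f g : ℕ → ℕ)
    (hr : ∀ i < N, 1 ≤ f i ∧ f i ≤ N)
    (hinjf : ∀ i < N, ∀ i' < N, f i = f i' → i = i')
    (hg : ∀ i < N, g i < g (f i)) :
    (∀ k < N, f^[k] 0 < N) ∧ f^[N] 0 = N ∧
      (∀ x < N + 1, ∃! k, k < N + 1 ∧ f^[k] 0 = x) := by
  set p : ℕ → ℕ := fun k => f^[k] 0 with hp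
  have pstep : ∀ k, p (k+1) = f (p k) := fun k => Function.iterate_succ_apply' f k 0
  -- no early hit of N
  have nohit : ∀ k < N, p k ≠ N := by
    by_contra hcon
    push_neg at hcon
    obtain ⟨k, hkN, hkval⟩ := hcon
    -- take minimal such k
    have hex : ∃ k, k < N ∧ p k = N := ⟨k, hkN, hkval⟩
    classical
    let k0 := Nat.find hex
    obtain ⟨hk0N, hk0val⟩ : k0 < N ∧ p k0 = N := Nat.find_spec hex
    have hmin : ∀ r < k0, ¬(r < N ∧ p r = N) := fun r hr' => Nat.find_min hex hr'
    have hbelow : ∀ r < k0, p r < N := by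
      intro r hrk
      induction r with
      | zero => exact Nat.lt_of_lt_of_le Nat.zero_lt_one hN
      | succ r ih =>
        have h1 : p r < N := ih (by omega)
        have h2 := (hr _ h1).2
        have h3 := hmin _ hrk
        rw [pstep]
        rcases lt_or_eq_of_le h2 with h | h
        · exact h
        · exact absurd ⟨by omega, by rw [pstep]; exact h⟩ h3
    have k0pos : 1 ≤ k0 := by
      rcases Nat.eq_zero_or_pos k0 with h | h
      · exfalso; rw [h] at hk0val; simp [hp] at hk0val; omega
      · exact h
    -- p is injective on range k0 via g strictly increasing
    have gmono : ∀ r r', r < r' → r' ≤ k0 → g (p r) < g (p r') := by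
      intro r r' hlt hle
      induction r' with
      | zero => omega
      | succ r' ih =>
        have hstep : g (p r') < g (p (r'+1)) := by
          rw [pstep]
          exact hg _ (by
            rcases lt_or_eq_of_le hle with h | h
            · exact hbelow _ (by omega)
            · have := hbelow r' (by omega); exact this)
        rcases lt_or_eq_of_le (Nat.lt_succ_iff.mp hlt) with h | h
        · exact lt_trans (ih h (by omega)) hstep
        · rw [h]; exact hstep
    have pinj : Set.InjOn p (Finset.range k0 : Finset ℕ) := by
      intro r hr1 r' hr2 heq
      simp at hr1 hr2
      rcases lt_trichotomy r r' with h | h | h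
      · have := gmono r r' h (by omega); rw [heq] at this; omega
      · exact h
      · have := gmono r' r h (by omega); rw [heq] at this; omega
    set O : Finset ℕ := (Finset.range k0).image p with hO
    have cardO : O.card = k0 := by
      rw [hO, Finset.card_image_of_injOn pinj, Finset.card_range]
    have hOsub : O ⊆ Finset.range N := by
      intro x hx
      simp [hO] at hx
      obtain ⟨r, hr1, rfl⟩ := hx
      simpa using hbelow r hr1
    set Z : Finset ℕ := Finset.range N \ O with hZ
    have cardZ : Z.card = N - k0 := by
      rw [hZ, Finset.card_sdiff_of_subset hOsub, Finset.card_range, cardO]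
    have hZne : Z.Nonempty := by
      apply Finset.card_pos.mp; omega
    have hZstep : ∀ z ∈ Z, f z ∈ Z := by
      intro z hz
      simp [hZ, hO] at hz ⊢
      obtain ⟨hzN, hznO⟩ := hz
      have hfz := hr z hzN
      constructor
      · -- f z < N
        rcases lt_or_eq_of_le hfz.2 with h | h
        · exact h
        · exfalso
          have : f z = p k0 := by rw [h, hk0val]
          rw [show k0 = (k0 - 1) + 1 by omega, pstep] at this
          have := hinjf z hzN _ (hbelow (k0-1) (by omega)) this
          exact hznO _ (by omega) this.symm
      · intro r hrk0 hreq
        rcases Nat.eq_zero_or_pos r with h | h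
        · rw [h] at hreq; simp [hp] at hreq; omega
        · rw [show r = (r-1) + 1 by omega, pstep] at hreq
          have := hinjf z hzN _ (hbelow (r-1) (by omega)) hreq.symm
          exact hznO _ (by omega) this.symm
    obtain ⟨z0, hz0⟩ := hZne
    have hit : ∀ r, f^[r] z0 ∈ Z := by
      intro r
      induction r with
      | zero => simpa using hz0
      | succ r ih => rw [Function.iterate_succ_apply']; exact hZstep _ ih
    have hitlt : ∀ r, f^[r] z0 < N := by
      intro r
      have := hit r
      simp [hZ] at this
      exact this.1
    have gmono2 : ∀ r r', r < r' → g (f^[r] z0) < g (f^[r'] z0) := by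
      intro r r' hlt
      induction r' with
      | zero => omega
      | succ r' ih =>
        have hstep : g (f^[r'] z0) < g (f^[r'+1] z0) := by
          rw [Function.iterate_succ_apply']
          exact hg _ (hitlt r')
        rcases lt_or_eq_of_le (Nat.lt_succ_iff.mp hlt) with h | h
        · exact lt_trans (ih h) hstep
        · rw [h]; exact hstep
    have : Z.card + 1 ≤ Z.card := by
      have hinj2 : Set.InjOn (fun r => f^[r] z0) (Finset.range (Z.card + 1) : Finset ℕ) := by
        intro r hr1 r' hr2 heq
        rcases lt_trichotomy r r' with h | h | h
        · have := gmono2 r r' h; simp only at heq; rw [heq] at this; omega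
        · exact h
        · have := gmono2 r' r h; simp only at heq; rw [heq] at this; omega
      have := Finset.card_le_card_of_injOn (fun r => f^[r] z0) (fun r _ => hit r) hinj2
      simpa using this
    omega
  -- all iterates before N stay < N
  have pltN : ∀ k < N, p k < N := by
    intro k hk
    induction k with
    | zero => exact Nat.lt_of_lt_of_le Nat.zero_lt_one hN
    | succ k ih =>
      have h1 : p k < N := ih (by omega)
      have h2 := (hr _ h1).2
      rw [pstep]
      rcases lt_or_eq_of_le h2 with h | h
      · exact h
      · exact absurd (by rw [pstep]; exact h) (nohit _ hk)
  -- g strictly increasing along orbit up to N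
  have gmono : ∀ r r', r < r' → r' ≤ N → g (p r) < g (p r') := by
    intro r r' hlt hle
    induction r' with
    | zero => omega
    | succ r' ih =>
      have hstep : g (p r') < g (p (r'+1)) := by
        rw [pstep]; exact hg _ (pltN _ (by omega))
      rcases lt_or_eq_of_le (Nat.lt_succ_iff.mp hlt) with h | h
      · exact lt_trans (ih h (by omega)) hstep
      · rw [h]; exact hstep
  have pinj : ∀ r ≤ N, ∀ r' ≤ N, p r = p r' → r = r' := by
    intro r hr1 r' hr2 heq
    rcases lt_trichotomy r r' with h | h | h
    · have := gmono r r' h hr2; rw [heq] at this; omega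
    · exact h
    · have := gmono r' r h hr1; rw [heq] at this; omega
  have pN : p N = N := by
    have h1 : p N ≤ N := by
      have e : p N = f (p (N-1)) := by rw [← pstep]; congr 1; omega
      rw [e]
      exact (hr (p (N-1)) (pltN (N-1) (by omega))).2
    rcases lt_or_eq_of_le h1 with h | h
    · exfalso
      -- p N ∈ range N but distinct from p 0 .. p (N-1) which fill range N
      have himg : (Finset.range N).image p = Finset.range N := by
        apply Finset.eq_of_subset_of_card_le
        · intro x hx; simp at hx ⊢; obtain ⟨r, hr', rfl⟩ := hx; exact pltN _ hr'
        · rw [Finset.card_image_of_injOn, Finset.card_range]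
          intro a ha b hb hab
          simp at ha hb
          exact pinj a (by omega) b (by omega) hab
      have : p N ∈ (Finset.range N).image p := by rw [himg]; simpa using h
      simp at this
      obtain ⟨r, hr', heq⟩ := this
      have := pinj r (by omega) N (le_refl _) heq
      omega
    · exact h
  refine ⟨pltN, pN, ?_⟩
  intro x hx
  -- surjectivity
  have hsurj : ∃ k, k < N + 1 ∧ p k = x := by
    rcases lt_or_eq_of_le (Nat.lt_succ_iff.mp hx) with h | h
    · have himg : (Finset.range N).image p = Finset.range N := by
        apply Finset.eq_of_subset_of_card_le
        · intro y hy; simp at hy ⊢; obtain ⟨r, hr', rfl⟩ := hy; exact pltN _ hr'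
        · rw [Finset.card_image_of_injOn, Finset.card_range]
          intro a ha b hb hab
          simp at ha hb
          exact pinj a (by omega) b (by omega) hab
      have : x ∈ (Finset.range N).image p := by rw [himg]; simpa using h
      simp at this
      obtain ⟨r, hr', heq⟩ := this
      exact ⟨r, by omega, heq⟩
    · exact ⟨N, by omega, by rw [pN, h]⟩
  obtain ⟨k, hk1, hk2⟩ := hsurj
  exact ⟨k, ⟨hk1, hk2⟩, fun y hy => pinj y (by omega) k (by omega) (hy.2.trans hk2.symm)⟩

def cls : Gam → ℕ
  | Sum.inl _ => 0
  | Sum.inr (Sum.inl _) => 1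
  | Sum.inr (Sum.inr x) => 2 + x.val

lemma cls_vv (i : ℕ) : cls (vv i) = 0 := rfl
lemma cls_ww (i : ℕ) : cls (ww i) = 1 := rfl
lemma cls_dag : cls dag = 2 := rfl
lemma cls_hash : cls hash = 3 := rfl
lemma cls_dollar : cls dollar = 4 := rfl

lemma vv_inj {a b : ℕ} (h : vv a = vv b) : a = b := by simpa [vv] using h
lemma ww_inj {a b : ℕ} (h : ww a = ww b) : a = b := by simpa [ww] using h

lemma extract (n m : ℕ) (hn : 2 ≤ n) (δ : ℕ → ℕ) (c : ℕ → ℕ → ℕ)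
    (hδ : ∀ i < n - 1, 2 ≤ δ i)
    (hper : ∀ i < n - 1, ∀ j, c i (j + δ i) = c i j)
    (hinj : ∀ i < n - 1, ∀ j < δ i, ∀ j' < δ i, c i j = c i j' → j = j')
    (hm : m = ∑ i ∈ Finset.range (n - 1), δ i)
    (Q : List Gam)
    (hC : ∀ i, i < n → ∃ p, Q[p]? = some (if i = 0 then dag else vv i) ∧
        Q[p+1]? = some hash ∧ Q[p+2]? = some (if i = n - 1 then dollar else ww i))
    (hA : ∀ i j, i < n - 1 → j < δ i → ∃ p, Q[p]? = some (ww i) ∧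
        Q[p+1]? = some (vv (c i j)) ∧ Q[p+2]? = some (ww i))
    (hB : ∀ i j, i < n - 1 → j < δ i → ∃ p, Q[p]? = some (vv (c i j)) ∧
        Q[p+1]? = some (ww i) ∧ Q[p+2]? = some (vv (c i (j+1)))) :
    2 * m + 3 * n ≤ Q.length ∧
    (Q.length = 2 * m + 3 * n →
      ∃ p : ℕ → ℕ, (∀ x < n, ∃! k, k < n ∧ p k = x) ∧ p 0 = 0 ∧ p (n-1) = n-1 ∧
        ∀ k < n - 1, ∃ j < δ (p k), c (p k) j = p (k+1)) := by
  classical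
  -- choice of occurrence positions
  obtain ⟨pC, hpC⟩ : ∃ pC : ℕ → ℕ, ∀ i, i < n →
      Q[pC i]? = some (if i = 0 then dag else vv i) ∧ Q[pC i + 1]? = some hash ∧
      Q[pC i + 2]? = some (if i = n - 1 then dollar else ww i) := by
    choose f hf using fun i => (by
      by_cases h : i < n
      · obtain ⟨p, hp⟩ := hC i h; exact ⟨p, fun _ => hp⟩
      · exact ⟨0, fun h' => absurd h' h⟩ :
        ∃ p, i < n → Q[p]? = some (if i = 0 then dag else vv i) ∧
          Q[p+1]? = some hash ∧ Q[p+2]? = some (if i = n - 1 then dollar else ww i))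
    exact ⟨f, hf⟩
  obtain ⟨pA, hpA⟩ : ∃ pA : ℕ → ℕ → ℕ, ∀ i j, i < n - 1 → j < δ i →
      Q[pA i j]? = some (ww i) ∧ Q[pA i j + 1]? = some (vv (c i j)) ∧
      Q[pA i j + 2]? = some (ww i) := by
    choose f hf using fun i j => (by
      by_cases h : i < n - 1 ∧ j < δ i
      · obtain ⟨p, hp⟩ := hA i j h.1 h.2; exact ⟨p, fun _ _ => hp⟩
      · exact ⟨0, fun h1 h2 => absurd ⟨h1, h2⟩ h⟩ :
        ∃ p, i < n - 1 → j < δ i → Q[p]? = some (ww i) ∧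
          Q[p+1]? = some (vv (c i j)) ∧ Q[p+2]? = some (ww i))
    exact ⟨f, fun i j h1 h2 => hf i j h1 h2⟩
  obtain ⟨pB, hpB⟩ : ∃ pB : ℕ → ℕ → ℕ, ∀ i j, i < n - 1 → j < δ i →
      Q[pB i j]? = some (vv (c i j)) ∧ Q[pB i j + 1]? = some (ww i) ∧
      Q[pB i j + 2]? = some (vv (c i (j+1))) := by
    choose f hf using fun i j => (by
      by_cases h : i < n - 1 ∧ j < δ i
      · obtain ⟨p, hp⟩ := hB i j h.1 h.2; exact ⟨p, fun _ _ => hp⟩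
      · exact ⟨0, fun h1 h2 => absurd ⟨h1, h2⟩ h⟩ :
        ∃ p, i < n - 1 → j < δ i → Q[p]? = some (vv (c i j)) ∧
          Q[p+1]? = some (ww i) ∧ Q[p+2]? = some (vv (c i (j+1))))
    exact ⟨f, fun i j h1 h2 => hf i j h1 h2⟩
  -- head symbol of C i
  have hCv : ∀ i, 1 ≤ i → i < n → Q[pC i]? = some (vv i) := by
    intro i h1 h2
    have := (hpC i h2).1
    rwa [if_neg (by omega)] at this
  have hC0 : Q[pC 0]? = some dag := by
    have := (hpC 0 (by omega)).1
    rwa [if_pos rfl] at this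
  have hCw : ∀ i, i < n - 1 → Q[pC i + 2]? = some (ww i) := by
    intro i h
    have := (hpC i (by omega)).2.2
    rwa [if_neg (by omega)] at this
  have hCd : Q[pC (n-1) + 2]? = some dollar := by
    have := (hpC (n-1) (by omega)).2.2
    rwa [if_pos rfl] at this
  -- the marked position sets
  set L := Q.length with hL
  set Ds : Finset ℕ := {pC 0} with hDs
  set Do : Finset ℕ := {pC (n-1) + 2} with hDo
  set Hs : Finset ℕ := (Finset.range n).image (fun i => pC i + 1) with hHs
  set VsB : Finset ℕ := (Finset.range (n-1)).biUnion
    (fun i => (Finset.range (δ i)).image (fun j => pB i j)) with hVsB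
  set VsC : Finset ℕ := (Finset.Icc 1 (n-1)).image pC with hVsC
  set WsA : Finset ℕ := (Finset.range (n-1)).biUnion
    (fun i => (Finset.range (δ i)).image (fun j => pA i j + 2)) with hWsA
  set WsC : Finset ℕ := (Finset.range (n-1)).image (fun i => pC i + 2) with hWsC
  set U : Finset ℕ := Ds ∪ Do ∪ Hs ∪ VsB ∪ VsC ∪ WsA ∪ WsC with hU
  -- symbol class of members
  have mDs : ∀ x ∈ Ds, ∃ g, Q[x]? = some g ∧ cls g = 2 := by
    intro x hx
    rw [hDs, Finset.mem_singleton] at hx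
    exact ⟨dag, hx ▸ hC0, rfl⟩
  have mDo : ∀ x ∈ Do, ∃ g, Q[x]? = some g ∧ cls g = 4 := by
    intro x hx
    rw [hDo, Finset.mem_singleton] at hx
    exact ⟨dollar, hx ▸ hCd, rfl⟩
  have mHs : ∀ x ∈ Hs, ∃ g, Q[x]? = some g ∧ cls g = 3 := by
    intro x hx
    rw [hHs, Finset.mem_image] at hx
    obtain ⟨i, hi, rfl⟩ := hx
    simp only [Finset.mem_range] at hi
    exact ⟨hash, (hpC i hi).2.1, rfl⟩
  have mVsB : ∀ x ∈ VsB, ∃ g, Q[x]? = some g ∧ cls g = 0 := by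
    intro x hx
    rw [hVsB, Finset.mem_biUnion] at hx
    obtain ⟨i, hi, hx⟩ := hx
    rw [Finset.mem_image] at hx
    obtain ⟨j, hj, rfl⟩ := hx
    simp only [Finset.mem_range] at hi hj
    exact ⟨_, (hpB i j hi hj).1, rfl⟩
  have mVsC : ∀ x ∈ VsC, ∃ g, Q[x]? = some g ∧ cls g = 0 := by
    intro x hx
    rw [hVsC, Finset.mem_image] at hx
    obtain ⟨i, hi, rfl⟩ := hx
    rw [Finset.mem_Icc] at hi
    exact ⟨_, hCv i hi.1 (by omega), rfl⟩
  have mWsA : ∀ x ∈ WsA, ∃ g, Q[x]? = some g ∧ cls g = 1 := by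
    intro x hx
    rw [hWsA, Finset.mem_biUnion] at hx
    obtain ⟨i, hi, hx⟩ := hx
    rw [Finset.mem_image] at hx
    obtain ⟨j, hj, rfl⟩ := hx
    simp only [Finset.mem_range] at hi hj
    exact ⟨_, (hpA i j hi hj).2.2, rfl⟩
  have mWsC : ∀ x ∈ WsC, ∃ g, Q[x]? = some g ∧ cls g = 1 := by
    intro x hx
    rw [hWsC, Finset.mem_image] at hx
    obtain ⟨i, hi, rfl⟩ := hx
    simp only [Finset.mem_range] at hi
    exact ⟨_, hCw i hi, rfl⟩
  have hdisj : ∀ (s t : Finset ℕ) (cs ct : ℕ), cs ≠ ct →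
      (∀ x ∈ s, ∃ g, Q[x]? = some g ∧ cls g = cs) →
      (∀ x ∈ t, ∃ g, Q[x]? = some g ∧ cls g = ct) → Disjoint s t := by
    intro s t cs ct hne hs ht
    rw [Finset.disjoint_left]
    intro x hx1 hx2
    obtain ⟨g1, e1, c1⟩ := hs x hx1
    obtain ⟨g2, e2, c2⟩ := ht x hx2
    rw [e1] at e2
    apply hne
    rw [← c1, ← c2, Option.some_inj.mp e2]
  -- injectivity of pC
  have hpCinj : ∀ i, i < n → ∀ i', i' < n → pC i = pC i' → i = i' := by
    intro i hi i' hi' he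
    have e1 := (hpC i hi).1
    have e2 := (hpC i' hi').1
    rw [he, e2, Option.some_inj] at e1
    by_cases h0 : i = 0 <;> by_cases h0' : i' = 0
    · omega
    · rw [if_pos h0, if_neg h0'] at e1; simp [dag, vv] at e1
    · rw [if_neg h0, if_pos h0'] at e1; simp [dag, vv] at e1
    · rw [if_neg h0, if_neg h0'] at e1; exact (vv_inj e1).symm
  -- special disjointness
  have dVs : Disjoint VsB VsC := by
    rw [Finset.disjoint_left]
    intro x hx1 hx2
    rw [hVsB, Finset.mem_biUnion] at hx1
    obtain ⟨i, hi, hx1⟩ := hx1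
    rw [Finset.mem_image] at hx1
    obtain ⟨j, hj, hbx⟩ := hx1
    simp only [Finset.mem_range] at hi hj
    rw [hVsC, Finset.mem_image] at hx2
    obtain ⟨i', hi', hcx⟩ := hx2
    rw [Finset.mem_Icc] at hi'
    have e1 := (hpB i j hi hj).2.1
    have e2 := (hpC i' (by omega)).2.1
    rw [hbx, ← hcx, e2, Option.some_inj] at e1
    simp [ww, _root_.hash] at e1
  have dWs : Disjoint WsA WsC := by
    rw [Finset.disjoint_left]
    intro x hx1 hx2
    rw [hWsA, Finset.mem_biUnion] at hx1
    obtain ⟨i, hi, hx1⟩ := hx1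
    rw [Finset.mem_image] at hx1
    obtain ⟨j, hj, hax⟩ := hx1
    simp only [Finset.mem_range] at hi hj
    rw [hWsC, Finset.mem_image] at hx2
    obtain ⟨i', hi', hcx⟩ := hx2
    simp only [Finset.mem_range] at hi'
    have hpe : pA i j + 1 = pC i' + 1 := by omega
    have e1 := (hpA i j hi hj).2.1
    have e2 := (hpC i' (by omega)).2.1
    rw [hpe, e2, Option.some_inj] at e1
    simp [vv, _root_.hash] at e1
  -- cardinalities
  have cDs : Ds.card = 1 := by rw [hDs]; simp
  have cDo : Do.card = 1 := by rw [hDo]; simp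
  have cHs : Hs.card = n := by
    rw [hHs, Finset.card_image_of_injOn, Finset.card_range]
    intro i hi i' hi' he
    simp only [Finset.coe_range, Set.mem_Iio] at hi hi'
    have he2 : pC i + 1 = pC i' + 1 := he
    exact hpCinj i hi i' hi' (by omega)
  have cVsB : VsB.card = m := by
    rw [hVsB, Finset.card_biUnion]
    · rw [hm]
      apply Finset.sum_congr rfl
      intro i hi
      simp only [Finset.mem_range] at hi
      rw [Finset.card_image_of_injOn, Finset.card_range]
      intro j hj j' hj' he
      simp only [Finset.coe_range, Set.mem_Iio] at hj hj'
      have he2 : pB i j = pB i j' := he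
      have e1 := (hpB i j hi hj).1
      have e2 := (hpB i j' hi hj').1
      rw [he2, e2, Option.some_inj] at e1
      exact (hinj i hi j' hj' j hj (vv_inj e1)).symm
    · intro i hi i' hi' hne
      simp only [Finset.coe_range, Set.mem_Iio, Finset.mem_range] at hi hi'
      rw [Function.onFun, Finset.disjoint_left]
      intro x hx1 hx2
      rw [Finset.mem_image] at hx1 hx2
      obtain ⟨j, hj, hjx⟩ := hx1
      obtain ⟨j', hj', hjx'⟩ := hx2
      simp only [Finset.mem_range] at hj hj'
      have hjx2 : pB i j = x := hjx
      have hjx2' : pB i' j' = x := hjx'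
      have e1 := (hpB i j hi hj).2.1
      have e2 := (hpB i' j' hi' hj').2.1
      rw [hjx2, ← hjx2', e2, Option.some_inj] at e1
      exact hne (ww_inj e1).symm
  have cVsC : VsC.card = n - 1 := by
    rw [hVsC, Finset.card_image_of_injOn]
    · simp
    · intro i hi i' hi' he
      simp only [Finset.coe_Icc, Set.mem_Icc] at hi hi'
      exact hpCinj i (by omega) i' (by omega) he
  have cWsA : WsA.card = m := by
    rw [hWsA, Finset.card_biUnion]
    · rw [hm]
      apply Finset.sum_congr rfl
      intro i hi
      simp only [Finset.mem_range] at hi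
      rw [Finset.card_image_of_injOn, Finset.card_range]
      intro j hj j' hj' he
      simp only [Finset.coe_range, Set.mem_Iio] at hj hj'
      have he2 : pA i j + 2 = pA i j' + 2 := he
      have hpe : pA i j + 1 = pA i j' + 1 := by omega
      have e1 := (hpA i j hi hj).2.1
      have e2 := (hpA i j' hi hj').2.1
      rw [hpe, e2, Option.some_inj] at e1
      exact (hinj i hi j' hj' j hj (vv_inj e1)).symm
    · intro i hi i' hi' hne
      simp only [Finset.coe_range, Set.mem_Iio, Finset.mem_range] at hi hi'
      rw [Function.onFun, Finset.disjoint_left]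
      intro x hx1 hx2
      rw [Finset.mem_image] at hx1 hx2
      obtain ⟨j, hj, hjx⟩ := hx1
      obtain ⟨j', hj', hjx'⟩ := hx2
      simp only [Finset.mem_range] at hj hj'
      have hjx2 : pA i j + 2 = x := hjx
      have hjx2' : pA i' j' + 2 = x := hjx'
      have e1 := (hpA i j hi hj).2.2
      have e2 := (hpA i' j' hi' hj').2.2
      rw [hjx2, ← hjx2', e2, Option.some_inj] at e1
      exact hne (ww_inj e1).symm
  have cWsC : WsC.card = n - 1 := by
    rw [hWsC, Finset.card_image_of_injOn, Finset.card_range]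
    intro i hi i' hi' he
    simp only [Finset.coe_range, Set.mem_Iio] at hi hi'
    dsimp only at he
    exact hpCinj i (by omega) i' (by omega) (by omega)
  -- total cardinality
  have cU : U.card = 2 * m + 3 * n := by
    rw [hU]
    rw [Finset.card_union_of_disjoint, Finset.card_union_of_disjoint,
      Finset.card_union_of_disjoint, Finset.card_union_of_disjoint,
      Finset.card_union_of_disjoint, Finset.card_union_of_disjoint]
    · rw [cDs, cDo, cHs, cVsB, cVsC, cWsA, cWsC]; omega
    · exact hdisj _ _ 2 4 (by omega) mDs mDo
    · rw [Finset.disjoint_union_left]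
      exact ⟨hdisj _ _ 2 3 (by omega) mDs mHs, hdisj _ _ 4 3 (by omega) mDo mHs⟩
    · rw [Finset.disjoint_union_left, Finset.disjoint_union_left]
      exact ⟨⟨hdisj _ _ 2 0 (by omega) mDs mVsB, hdisj _ _ 4 0 (by omega) mDo mVsB⟩,
        hdisj _ _ 3 0 (by omega) mHs mVsB⟩
    · rw [Finset.disjoint_union_left, Finset.disjoint_union_left,
        Finset.disjoint_union_left]
      exact ⟨⟨⟨hdisj _ _ 2 0 (by omega) mDs mVsC, hdisj _ _ 4 0 (by omega) mDo mVsC⟩,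
        hdisj _ _ 3 0 (by omega) mHs mVsC⟩, dVs⟩
    · rw [Finset.disjoint_union_left, Finset.disjoint_union_left,
        Finset.disjoint_union_left, Finset.disjoint_union_left]
      exact ⟨⟨⟨⟨hdisj _ _ 2 1 (by omega) mDs mWsA, hdisj _ _ 4 1 (by omega) mDo mWsA⟩,
        hdisj _ _ 3 1 (by omega) mHs mWsA⟩, hdisj _ _ 0 1 (by omega) mVsB mWsA⟩,
        hdisj _ _ 0 1 (by omega) mVsC mWsA⟩
    · rw [Finset.disjoint_union_left, Finset.disjoint_union_left,
        Finset.disjoint_union_left, Finset.disjoint_union_left,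
        Finset.disjoint_union_left]
      exact ⟨⟨⟨⟨⟨hdisj _ _ 2 1 (by omega) mDs mWsC, hdisj _ _ 4 1 (by omega) mDo mWsC⟩,
        hdisj _ _ 3 1 (by omega) mHs mWsC⟩, hdisj _ _ 0 1 (by omega) mVsB mWsC⟩,
        hdisj _ _ 0 1 (by omega) mVsC mWsC⟩, dWs⟩
  -- U lives inside the positions of Q
  have mU : ∀ x ∈ U, ∃ g : Gam, Q[x]? = some g := by
    intro x hx
    rw [hU] at hx
    simp only [Finset.mem_union] at hx
    rcases hx with ((((((h|h)|h)|h)|h)|h)|h)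
    · exact (mDs x h).imp fun g hg => hg.1
    · exact (mDo x h).imp fun g hg => hg.1
    · exact (mHs x h).imp fun g hg => hg.1
    · exact (mVsB x h).imp fun g hg => hg.1
    · exact (mVsC x h).imp fun g hg => hg.1
    · exact (mWsA x h).imp fun g hg => hg.1
    · exact (mWsC x h).imp fun g hg => hg.1
  have hUsub : U ⊆ Finset.range L := by
    intro x hx
    obtain ⟨g, hg⟩ := mU x hx
    rw [Finset.mem_range]
    exact (List.getElem?_eq_some_iff.mp hg).1
  have part1 : 2 * m + 3 * n ≤ L := by
    calc 2 * m + 3 * n = U.card := cU.symm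
    _ ≤ (Finset.range L).card := Finset.card_le_card hUsub
    _ = L := Finset.card_range L
  refine ⟨part1, ?_⟩
  intro hlen
  have hbound : ∀ {x : ℕ} {g : Gam}, Q[x]? = some g → x < L :=
    fun h => (List.getElem?_eq_some_iff.mp h).1
  have hUeq : U = Finset.range L := by
    apply Finset.eq_of_subset_of_card_le hUsub
    rw [Finset.card_range, cU]
    omega
  have sat : ∀ x, x < L → x ∈ U := by
    intro x hx
    rw [hUeq]
    exact Finset.mem_range.mpr hx
  -- classification of w-positions
  have Cw : ∀ x a, Q[x]? = some (ww a) →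
      ((∃ i, i < n-1 ∧ ∃ j, j < δ i ∧ x = pA i j + 2 ∧ a = i) ∨
       (∃ i, i < n-1 ∧ x = pC i + 2 ∧ a = i)) := by
    intro x a hx
    have hxU := sat x (hbound hx)
    rw [hU] at hxU
    simp only [Finset.mem_union] at hxU
    rcases hxU with ((((((h|h)|h)|h)|h)|h)|h)
    · exfalso
      rw [hDs, Finset.mem_singleton] at h
      subst h
      rw [hC0, Option.some_inj] at hx
      simp [dag, ww] at hx
    · exfalso
      rw [hDo, Finset.mem_singleton] at h
      subst h
      rw [hCd, Option.some_inj] at hx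
      simp [dollar, ww] at hx
    · exfalso
      rw [hHs, Finset.mem_image] at h
      obtain ⟨i, hi, hix⟩ := h
      simp only [Finset.mem_range] at hi
      have hix2 : pC i + 1 = x := hix
      rw [← hix2, (hpC i hi).2.1, Option.some_inj] at hx
      simp [_root_.hash, ww] at hx
    · exfalso
      rw [hVsB, Finset.mem_biUnion] at h
      obtain ⟨i, hi, h⟩ := h
      rw [Finset.mem_image] at h
      obtain ⟨j, hj, hjx⟩ := h
      simp only [Finset.mem_range] at hi hj
      have hjx2 : pB i j = x := hjx
      rw [← hjx2, (hpB i j hi hj).1, Option.some_inj] at hx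
      simp [vv, ww] at hx
    · exfalso
      rw [hVsC, Finset.mem_image] at h
      obtain ⟨i, hi, hix⟩ := h
      rw [Finset.mem_Icc] at hi
      rw [← hix, hCv i hi.1 (by omega), Option.some_inj] at hx
      simp [vv, ww] at hx
    · left
      rw [hWsA, Finset.mem_biUnion] at h
      obtain ⟨i, hi, h⟩ := h
      rw [Finset.mem_image] at h
      obtain ⟨j, hj, hjx⟩ := h
      simp only [Finset.mem_range] at hi hj
      have hjx2 : pA i j + 2 = x := hjx
      refine ⟨i, hi, j, hj, hjx2.symm, ?_⟩
      rw [← hjx2, (hpA i j hi hj).2.2, Option.some_inj] at hx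
      exact (ww_inj hx).symm
    · right
      rw [hWsC, Finset.mem_image] at h
      obtain ⟨i, hi, hix⟩ := h
      simp only [Finset.mem_range] at hi
      have hix2 : pC i + 2 = x := hix
      refine ⟨i, hi, hix2.symm, ?_⟩
      rw [← hix2, hCw i hi, Option.some_inj] at hx
      exact (ww_inj hx).symm
  -- classification of v-positions
  have Cv : ∀ x a, Q[x]? = some (vv a) →
      ((∃ i, i < n-1 ∧ ∃ j, j < δ i ∧ x = pB i j ∧ a = c i j) ∨
       (∃ k, 1 ≤ k ∧ k < n ∧ x = pC k ∧ a = k)) := by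
    intro x a hx
    have hxU := sat x (hbound hx)
    rw [hU] at hxU
    simp only [Finset.mem_union] at hxU
    rcases hxU with ((((((h|h)|h)|h)|h)|h)|h)
    · exfalso
      rw [hDs, Finset.mem_singleton] at h
      subst h
      rw [hC0, Option.some_inj] at hx
      simp [dag, vv] at hx
    · exfalso
      rw [hDo, Finset.mem_singleton] at h
      subst h
      rw [hCd, Option.some_inj] at hx
      simp [dollar, vv] at hx
    · exfalso
      rw [hHs, Finset.mem_image] at h
      obtain ⟨i, hi, hix⟩ := h
      simp only [Finset.mem_range] at hi
      have hix2 : pC i + 1 = x := hix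
      rw [← hix2, (hpC i hi).2.1, Option.some_inj] at hx
      simp [_root_.hash, vv] at hx
    · left
      rw [hVsB, Finset.mem_biUnion] at h
      obtain ⟨i, hi, h⟩ := h
      rw [Finset.mem_image] at h
      obtain ⟨j, hj, hjx⟩ := h
      simp only [Finset.mem_range] at hi hj
      have hjx2 : pB i j = x := hjx
      refine ⟨i, hi, j, hj, hjx2.symm, ?_⟩
      rw [← hjx2, (hpB i j hi hj).1, Option.some_inj] at hx
      exact (vv_inj hx).symm
    · right
      rw [hVsC, Finset.mem_image] at h
      obtain ⟨i, hi, hix⟩ := h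
      rw [Finset.mem_Icc] at hi
      refine ⟨i, hi.1, by omega, hix.symm, ?_⟩
      rw [← hix, hCv i hi.1 (by omega), Option.some_inj] at hx
      exact (vv_inj hx).symm
    · exfalso
      rw [hWsA, Finset.mem_biUnion] at h
      obtain ⟨i, hi, h⟩ := h
      rw [Finset.mem_image] at h
      obtain ⟨j, hj, hjx⟩ := h
      simp only [Finset.mem_range] at hi hj
      have hjx2 : pA i j + 2 = x := hjx
      rw [← hjx2, (hpA i j hi hj).2.2, Option.some_inj] at hx
      simp [vv, ww] at hx
    · exfalso
      rw [hWsC, Finset.mem_image] at h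
      obtain ⟨i, hi, hix⟩ := h
      simp only [Finset.mem_range] at hi
      have hix2 : pC i + 2 = x := hix
      rw [← hix2, hCw i hi, Option.some_inj] at hx
      simp [vv, ww] at hx
  -- each B-occurrence sits on its A-occurrence
  have hpBA : ∀ i j, i < n-1 → j < δ i → pB i j = pA i j + 1 := by
    intro i j hi hj
    have h2 := (hpB i j hi hj).2.1
    rcases Cw _ _ h2 with ⟨i', hi', j', hj', hx, ha⟩ | ⟨i', hi', hx, ha⟩
    · subst ha
      have hBA : pB i j = pA i j' + 1 := by omega
      have e1 := (hpB i j hi hj).1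
      have e2 := (hpA i j' hi' hj').2.1
      rw [hBA, e2, Option.some_inj] at e1
      have hjj : j' = j := hinj i hi j' hj' j hj (vv_inj e1)
      rw [hjj] at hBA
      exact hBA
    · exfalso
      subst ha
      have hBC : pB i j = pC i + 1 := by omega
      have e1 := (hpB i j hi hj).1
      have e2 := (hpC i (by omega)).2.1
      rw [hBC, e2, Option.some_inj] at e1
      simp [vv, _root_.hash] at e1
  have hA3 : ∀ i j, i < n-1 → j < δ i → Q[pA i j + 3]? = some (vv (c i (j+1))) := by
    intro i j hi hj
    have h := (hpB i j hi hj).2.2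
    rw [hpBA i j hi hj] at h
    have e : pA i j + 1 + 2 = pA i j + 3 := by omega
    rwa [e] at h
  have ccm : ∀ i, i < n-1 → ∀ x, c i x = c i (x % δ i) :=
    fun i hi => cmod (by have := hδ i hi; omega) (hper i hi)
  -- predecessor structure of A-occurrences
  have hpred : ∀ i, i < n-1 → ∀ j, j < δ i →
      pA i j = pC i + 2 ∨ ∃ j'', j'' < δ i ∧ pA i j = pA i j'' + 2 ∧ j = (j'' + 1) % δ i := by
    intro i hi j hj
    have h1 := (hpA i j hi hj).1
    rcases Cw _ _ h1 with ⟨i', hi', j'', hj'', hx, ha⟩ | ⟨i', hi', hx, ha⟩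
    · subst ha
      right
      refine ⟨j'', hj'', hx, ?_⟩
      have e1 := (hpA i j hi hj).2.1
      have e3 := hA3 i j'' hi' hj''
      have e : pA i j'' + 3 = pA i j + 1 := by omega
      rw [e, e1, Option.some_inj] at e3
      have hcc : c i j = c i ((j'' + 1) % δ i) := by
        rw [← ccm i hi]
        exact vv_inj e3
      exact hinj i hi j hj _ (Nat.mod_lt _ (by have := hδ i hi; omega)) hcc
    · subst ha
      left
      exact hx
  -- the chain lemma
  have LINK : ∀ i, i < n-1 → ∃ j0, j0 < δ i ∧ 1 ≤ c i j0 ∧ c i j0 < n ∧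
      pC (c i j0) = pC i + 2*(δ i) + 3 ∧ Q[pC i + 2*(δ i) + 2]? = some (ww i) := by
    intro i hi
    have hd2 : 2 ≤ δ i := hδ i hi
    set d := δ i with hd
    have hj0 : ∃ j0, j0 < d ∧ pA i j0 = pC i + 2 := by
      by_contra hcon
      push_neg at hcon
      have H : ∀ j, j < d → pA i ((j+1) % d) = pA i j + 2 := by
        intro j hj
        have hlt : (j+1) % d < d := Nat.mod_lt _ (by omega)
        rcases hpred i hi _ hlt with h | ⟨j'', hj'', hx, he⟩
        · exact absurd h (hcon _ hlt)
        · have hjj : j = j'' := modsucc_inj hj hj'' he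
          rw [← hjj] at hx
          exact hx
      have K : ∀ k, pA i (k % d) = pA i (0 % d) + 2 * k := by
        intro k
        induction k with
        | zero => simp
        | succ k ih =>
          have h1 := H (k % d) (Nat.mod_lt _ (by omega))
          rw [Nat.mod_add_mod] at h1
          rw [h1, ih]
          ring
      have hK := K d
      rw [Nat.mod_self, Nat.zero_mod] at hK
      omega
    obtain ⟨j0, hj0d, hj0e⟩ := hj0
    have hchain : ∀ r, r < d → pA i ((j0 + r) % d) = pC i + 2 + 2 * r := by
      intro r
      induction r with
      | zero =>
        intro _
        rw [Nat.add_zero, Nat.mod_eq_of_lt hj0d]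
        omega
      | succ r ih =>
        intro hr
        have hIH := ih (by omega)
        have hlt : (j0 + (r+1)) % d < d := Nat.mod_lt _ (by omega)
        rcases hpred i hi _ hlt with h | ⟨j'', hj'', hx, he⟩
        · exfalso
          have e1 := (hpA i _ hi hlt).2.1
          have e2 := (hpA i j0 hi hj0d).2.1
          rw [h, ← hj0e, e2, Option.some_inj] at e1
          have hjj : (j0 + (r+1)) % d = j0 := (hinj i hi j0 hj0d _ hlt (vv_inj e1)).symm
          have hmodeq : (j0 + (r+1)) % d = j0 % d := by
            rw [hjj, Nat.mod_eq_of_lt hj0d]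
          have hdvd : d ∣ (r+1) := by
            have h2 : j0 ≡ j0 + (r+1) [MOD d] := hmodeq.symm
            have h3 := (Nat.modEq_iff_dvd' (by omega)).mp h2
            have e4 : j0 + (r+1) - j0 = r + 1 := by omega
            rwa [e4] at h3
          have := Nat.le_of_dvd (by omega) hdvd
          omega
        · have hj2 : j'' = (j0 + r) % d := by
            apply modsucc_inj hj'' (Nat.mod_lt _ (by omega))
            rw [Nat.mod_add_mod]
            exact he.symm
          rw [hj2] at hx
          rw [hx, hIH]
          omega
    have hcover : ∀ j, j < d → pA i j ≤ pC i + 2 * d := by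
      intro j hj
      obtain ⟨r, hr, hrj⟩ := mod_shift_surj hj0d hj
      have hc := hchain r hr
      rw [hrj] at hc
      omega
    have hjl : (j0 + (d-1)) % d < d := Nat.mod_lt _ (by omega)
    have htail := hchain (d-1) (by omega)
    have hw2 : Q[pC i + 2*d + 2]? = some (ww i) := by
      have h := (hpA i _ hi hjl).2.2
      rw [htail] at h
      have e : pC i + 2 + 2*(d-1) + 2 = pC i + 2*d + 2 := by omega
      rwa [e] at h
    have hv3 : Q[pC i + 2*d + 3]? = some (vv (c i j0)) := by
      have h3 := hA3 i _ hi hjl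
      rw [htail] at h3
      have e : pC i + 2 + 2*(d-1) + 3 = pC i + 2*d + 3 := by omega
      rw [e] at h3
      have hcc : c i ((j0 + (d-1)) % d + 1) = c i j0 := by
        rw [ccm i hi]
        rw [Nat.mod_add_mod]
        have e2 : j0 + (d-1) + 1 = j0 + d := by omega
        rw [e2, Nat.add_mod_right, Nat.mod_eq_of_lt hj0d]
      rwa [hcc] at h3
    rcases Cv _ _ hv3 with ⟨i', hi', j', hj', hx, ha⟩ | ⟨k, hk1, hk2, hx, ha⟩
    · exfalso
      rw [hpBA i' j' hi' hj'] at hx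
      have e : pA i' j' = pC i + 2*d + 2 := by omega
      have e1 := (hpA i' j' hi' hj').1
      rw [e, hw2, Option.some_inj] at e1
      have hii : i = i' := ww_inj e1
      subst hii
      have := hcover j' hj'
      omega
    · refine ⟨j0, hj0d, by omega, by omega, ?_, hw2⟩
      rw [ha]
      exact hx.symm
  -- choose the successor edges
  obtain ⟨jn, hjn⟩ : ∃ jn : ℕ → ℕ, ∀ i, i < n-1 → jn i < δ i ∧ 1 ≤ c i (jn i) ∧
      c i (jn i) < n ∧ pC (c i (jn i)) = pC i + 2*(δ i) + 3 ∧
      Q[pC i + 2*(δ i) + 2]? = some (ww i) := by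
    choose f hf using fun i => (by
      by_cases h : i < n-1
      · obtain ⟨j0, h1, h2, h3, h4, h5⟩ := LINK i h
        exact ⟨j0, fun _ => ⟨h1, h2, h3, h4, h5⟩⟩
      · exact ⟨0, fun h' => absurd h' h⟩ :
        ∃ j0, i < n-1 → j0 < δ i ∧ 1 ≤ c i j0 ∧ c i j0 < n ∧
          pC (c i j0) = pC i + 2*(δ i) + 3 ∧ Q[pC i + 2*(δ i) + 2]? = some (ww i))
    exact ⟨f, hf⟩
  set nxt : ℕ → ℕ := fun i => c i (jn i) with hnxt
  have horb := orbit_lemma (n-1) (by omega) nxt pC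
    (by
      intro i hi
      obtain ⟨_, h2, h3, _, _⟩ := hjn i hi
      have hni : nxt i = c i (jn i) := rfl
      exact ⟨h2, by omega⟩)
    (by
      intro i hi i' hi' he
      have e1 := (hjn i hi).2.2.2.1
      have e2 := (hjn i' hi').2.2.2.1
      have hne : nxt i = c i (jn i) := rfl
      have hne' : nxt i' = c i' (jn i') := rfl
      rw [← hne] at e1
      rw [← hne'] at e2
      rw [he, e2] at e1
      have ew : pC i + 2*(δ i) + 2 = pC i' + 2*(δ i') + 2 := by omega
      have w1 := (hjn i hi).2.2.2.2
      have w2 := (hjn i' hi').2.2.2.2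
      rw [ew, w2, Option.some_inj] at w1
      exact (ww_inj w1).symm)
    (by
      intro i hi
      have e1 := (hjn i hi).2.2.2.1
      have hne : nxt i = c i (jn i) := rfl
      rw [← hne] at e1
      rw [e1]
      omega)
  obtain ⟨o1, o2, o3⟩ := horb
  refine ⟨fun k => nxt^[k] 0, ?_, rfl, o2, ?_⟩
  · have hnN : n = (n-1) + 1 := by omega
    rw [hnN]
    exact o3
  · intro k hk
    have hpk : nxt^[k] 0 < n-1 := o1 k hk
    refine ⟨jn (nxt^[k] 0), (hjn _ hpk).1, ?_⟩
    show c (nxt^[k] 0) (jn (nxt^[k] 0)) = nxt^[k+1] 0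
    rw [Function.iterate_succ_apply']

lemma len_flat (f : ℕ → List Gam) (N : ℕ) :
    ((List.range N).flatMap f).length = ∑ k ∈ Finset.range N, (f k).length := by
  induction N with
  | zero => simp
  | succ N ih =>
    rw [List.range_succ, List.flatMap_append, Finset.sum_range_succ]
    simp [ih]

lemma flat_take (g : ℕ → List Gam) {N k : ℕ} (h : k < N) :
    ∃ X Y, (List.range N).flatMap g = X ++ g k ++ Y := by
  induction N with
  | zero => omega
  | succ N ih =>
    rcases lt_or_eq_of_le (Nat.lt_succ_iff.mp h) with h' | h'
    · obtain ⟨X, Y, hXY⟩ := ih h'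
      exact ⟨X, Y ++ g N, by rw [List.range_succ, List.flatMap_append, hXY]; simp⟩
    · subst h'
      exact ⟨(List.range k).flatMap g, [], by rw [List.range_succ, List.flatMap_append]; simp⟩

lemma flat_pair (g : ℕ → List Gam) {N k : ℕ} (h : k + 1 < N) :
    ∃ X Y, (List.range N).flatMap g = X ++ g k ++ g (k+1) ++ Y := by
  induction N with
  | zero => omega
  | succ N ih =>
    rcases lt_or_eq_of_le (Nat.lt_succ_iff.mp h) with h' | h'
    · obtain ⟨X, Y, hXY⟩ := ih h'
      exact ⟨X, Y ++ g N, by rw [List.range_succ, List.flatMap_append, hXY]; simp⟩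
    · subst h'
      refine ⟨(List.range k).flatMap g, [], ?_⟩
      rw [List.range_succ, List.range_succ, List.flatMap_append, List.flatMap_append]
      simp

lemma construct (n m : ℕ) (hn : 2 ≤ n) (δ : ℕ → ℕ) (c : ℕ → ℕ → ℕ)
    (hδ : ∀ i < n - 1, 2 ≤ δ i)
    (hper : ∀ i < n - 1, ∀ j, c i (j + δ i) = c i j)
    (hm : m = ∑ i ∈ Finset.range (n - 1), δ i)
    (p : ℕ → ℕ)
    (hp : ∀ x < n, ∃! k, k < n ∧ p k = x)
    (hp0 : p 0 = 0) (hpN : p (n-1) = n-1)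
    (he : ∀ k < n - 1, ∃ j < δ (p k), c (p k) j = p (k+1)) :
    ∃ Q : List Gam, Q.length = 2*m + 3*n ∧
      (∀ i, i < n →
        [(if i = 0 then dag else vv i), hash, (if i = n-1 then dollar else ww i)] <:+: Q) ∧
      (∀ i j, i < n-1 → j < δ i → [ww i, vv (c i j), ww i] <:+: Q) ∧
      (∀ i j, i < n-1 → j < δ i → [vv (c i j), ww i, vv (c i (j+1))] <:+: Q) := by
  classical
  -- inverse of p
  obtain ⟨K, hK⟩ : ∃ K : ℕ → ℕ, ∀ x, x < n →
      K x < n ∧ p (K x) = x ∧ ∀ y, y < n → p y = x → y = K x := by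
    choose f hf using fun x => (by
      by_cases h : x < n
      · obtain ⟨k, ⟨hk1, hk2⟩, hk3⟩ := hp x h
        exact ⟨k, fun _ => ⟨hk1, hk2, fun y hy1 hy2 => hk3 y ⟨hy1, hy2⟩⟩⟩
      · exact ⟨0, fun h' => absurd h' h⟩ :
        ∃ k, x < n → k < n ∧ p k = x ∧ ∀ y, y < n → p y = x → y = k)
    exact ⟨f, hf⟩
  have hKinj : ∀ x, x < n → ∀ x', x' < n → K x = K x' → x = x' := by
    intro x hx x' hx' he'
    have h1 := (hK x hx).2.1
    have h2 := (hK x' hx').2.1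
    rw [he', h2] at h1
    exact h1.symm
  have hKimg : (Finset.range n).image K = Finset.range n := by
    apply Finset.eq_of_subset_of_card_le
    · intro y hy
      simp only [Finset.mem_image, Finset.mem_range] at hy ⊢
      obtain ⟨x, hx, rfl⟩ := hy
      exact (hK x hx).1
    · rw [Finset.card_image_of_injOn, Finset.card_range]
      intro a ha b hb hab
      simp only [Finset.coe_range, Set.mem_Iio] at ha hb
      exact hKinj a ha b hb hab
  have hplt : ∀ k, k < n → p k < n := by
    intro k hk
    have : k ∈ (Finset.range n).image K := by rw [hKimg]; simpa using hk
    simp only [Finset.mem_image, Finset.mem_range] at this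
    obtain ⟨x, hx, hxk⟩ := this
    have := (hK x hx).2.1
    rw [hxk] at this
    rw [this]
    exact hx
  have hpinj : ∀ k, k < n → ∀ k', k' < n → p k = p k' → k = k' := by
    intro k hk k' hk' he'
    have hx : p k < n := hplt k hk
    have h1 := (hK (p k) hx).2.2 k hk rfl
    have h2 := (hK (p k) hx).2.2 k' hk' he'.symm
    omega
  have hplt1 : ∀ k, k < n - 1 → p k < n - 1 := by
    intro k hk
    have h1 := hplt k (by omega)
    by_contra hcon
    have : p k = n - 1 := by omega
    rw [← hpN] at this
    have := hpinj k (by omega) (n-1) (by omega) this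
    omega
  have hK1 : ∀ i, 1 ≤ i → i < n - 1 → 1 ≤ K i ∧ K i < n - 1 ∧ p (K i) = i := by
    intro i h1 h2
    have hk := hK i (by omega)
    have hKne0 : K i ≠ 0 := by
      intro h0
      have := hk.2.1
      rw [h0, hp0] at this
      omega
    have hKnelast : K i ≠ n - 1 := by
      intro hl
      have := hk.2.1
      rw [hl, hpN] at this
      omega
    refine ⟨by omega, by have := hk.1; omega, hk.2.1⟩
  -- choose edges
  obtain ⟨ek, hek⟩ : ∃ ek : ℕ → ℕ, ∀ k, k < n-1 → ek k < δ (p k) ∧ c (p k) (ek k) = p (k+1) := by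
    choose f hf using fun k => (by
      by_cases h : k < n-1
      · obtain ⟨j, hj1, hj2⟩ := he k h
        exact ⟨j, fun _ => ⟨hj1, hj2⟩⟩
      · exact ⟨0, fun h' => absurd h' h⟩ :
        ∃ j, k < n-1 → j < δ (p k) ∧ c (p k) j = p (k+1))
    exact ⟨f, hf⟩
  -- the blocks and the string
  set blk : ℕ → List Gam := fun k =>
    hash :: (List.range (δ (p k) + 1)).flatMap
      (fun r => [ww (p k), vv (c (p k) (ek k + r))]) with hblk
  set REST : ℕ → List Gam := fun k => (List.range' k (n-1-k)).flatMap blk with hREST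
  set Q : List Gam := dag :: ((List.range (n-1)).flatMap blk ++ [hash, dollar]) with hQ
  have hRESTstep : ∀ k, k < n-1 → REST k = blk k ++ REST (k+1) := by
    intro k hk
    have e : n - 1 - k = (n - 1 - (k+1)) + 1 := by omega
    show (List.range' k (n-1-k)).flatMap blk = blk k ++ (List.range' (k+1) (n-1-(k+1))).flatMap blk
    rw [e, List.range'_succ, List.flatMap_cons]
  have hREST0 : (List.range (n-1)).flatMap blk = REST 0 := by
    show (List.range (n-1)).flatMap blk = (List.range' 0 (n-1-0)).flatMap blk
    rw [List.range_eq_range', Nat.sub_zero]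
  -- length computation
  have hblen : ∀ k, (blk k).length = 2 * δ (p k) + 3 := by
    intro k
    rw [hblk]
    simp only [List.length_cons]
    rw [len_flat]
    rw [Finset.sum_congr rfl (fun r _ => by simp : ∀ r ∈ Finset.range (δ (p k) + 1),
      ([ww (p k), vv (c (p k) (ek k + r))]).length = 2)]
    rw [Finset.sum_const, Finset.card_range, smul_eq_mul]
    omega
  have hsum : ∑ k ∈ Finset.range (n-1), δ (p k) = m := by
    rw [hm]
    apply Finset.sum_nbij' (fun k => p k) (fun x => K x)
    · intro a ha
      simp only [Finset.mem_range] at ha ⊢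
      exact hplt1 a ha
    · intro x hx
      simp only [Finset.mem_range] at hx ⊢
      rcases Nat.eq_zero_or_pos x with h0 | h0
      · subst h0
        have := (hK 0 (by omega)).2.2 0 (by omega) hp0
        omega
      · exact (hK1 x h0 hx).2.1
    · intro a ha
      simp only [Finset.mem_range] at ha
      exact ((hK (p a) (by have := hplt1 a ha; omega)).2.2 a (by omega) rfl).symm
    · intro x hx
      simp only [Finset.mem_range] at hx
      exact (hK x (by omega)).2.1
    · intro a ha
      rfl
  have hQlen : Q.length = 2*m + 3*n := by
    rw [hQ]
    simp only [List.length_cons, List.length_append]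
    rw [len_flat]
    rw [Finset.sum_congr rfl (fun k _ => hblen k)]
    rw [Finset.sum_add_distrib, Finset.sum_const, Finset.card_range, ← Finset.mul_sum, hsum]
    simp
    omega
  -- decomposition of Q at block k
  have hQk : ∀ k, k < n-1 → ∃ X, Q = X ++ blk k ++ REST (k+1) ++ [hash, dollar] := by
    intro k
    induction k with
    | zero =>
      intro _
      refine ⟨[dag], ?_⟩
      rw [hQ, hREST0, hRESTstep 0 (by omega)]
      simp
    | succ k ih =>
      intro hk
      obtain ⟨X, hX⟩ := ih (by omega)
      refine ⟨X ++ blk k, ?_⟩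
      rw [hX, hRESTstep (k+1) hk]
      simp
  have hblkQ : ∀ k, k < n-1 → blk k <:+: Q := by
    intro k hk
    obtain ⟨X, hX⟩ := hQk k hk
    exact ⟨X, REST (k+1) ++ [hash, dollar], by rw [hX]; simp⟩
  -- in-block occurrences
  have hmem : ∀ k, k < n-1 → ∀ r, r < δ (p k) →
      ([ww (p k), vv (c (p k) (ek k + r)), ww (p k)] <:+: blk k ∧
       [vv (c (p k) (ek k + r)), ww (p k), vv (c (p k) (ek k + r + 1))] <:+: blk k) := by
    intro k hk r hr
    obtain ⟨X, Y, hXY⟩ := flat_pair (fun r => [ww (p k), vv (c (p k) (ek k + r))])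
      (show r + 1 < δ (p k) + 1 by omega)
    have hbe : blk k = hash :: ((List.range (δ (p k) + 1)).flatMap
        (fun r => [ww (p k), vv (c (p k) (ek k + r))])) := rfl
    constructor
    · refine ⟨hash :: X, [vv (c (p k) (ek k + r + 1))] ++ Y, ?_⟩
      rw [hbe, hXY]
      simp [Nat.add_assoc]
    · refine ⟨hash :: (X ++ [ww (p k)]), Y, ?_⟩
      rw [hbe, hXY]
      simp [Nat.add_assoc]
  -- find the block of node i
  have hfind : ∀ i, i < n-1 → ∃ k, k < n-1 ∧ p k = i := by
    intro i hi
    rcases Nat.eq_zero_or_pos i with h0 | h0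
    · exact ⟨0, by omega, by rw [hp0, h0]⟩
    · obtain ⟨h1, h2, h3⟩ := hK1 i h0 hi
      exact ⟨K i, h2, h3⟩
  -- A and B occurrences
  have hAB : ∀ i j, i < n-1 → j < δ i →
      ([ww i, vv (c i j), ww i] <:+: Q ∧ [vv (c i j), ww i, vv (c i (j+1))] <:+: Q) := by
    intro i j hi hj
    obtain ⟨k, hk, hpk⟩ := hfind i hi
    have hd : 2 ≤ δ i := hδ i hi
    have hcc := cmod (f := c i) (show 0 < δ i by omega) (hper i hi)
    obtain ⟨r, hr, hre⟩ := mod_shift_surj (Nat.mod_lt (ek k) (show 0 < δ i by omega)) hj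
    rw [Nat.mod_add_mod] at hre
    have h1 : c i (ek k + r) = c i j := by rw [hcc (ek k + r), hre]
    have h2 : c i (ek k + r + 1) = c i (j+1) := by
      rw [hcc (ek k + r + 1), hcc (j+1)]
      rw [← Nat.mod_add_mod, hre]
    obtain ⟨hA', hB'⟩ := hmem k hk r (by rw [hpk]; exact hr)
    rw [hpk] at hA' hB'
    rw [h1] at hA' hB'
    rw [h2] at hB'
    exact ⟨hA'.trans (hblkQ k hk), hB'.trans (hblkQ k hk)⟩
  -- C occurrences
  have hCocc : ∀ i, i < n →
      [(if i = 0 then dag else vv i), hash, (if i = n-1 then dollar else ww i)] <:+: Q := by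
    intro i hi
    by_cases h0 : i = 0
    · subst h0
      rw [if_pos rfl, if_neg (by omega)]
      rw [hQ, hREST0, hRESTstep 0 (by omega)]
      have hbe : blk 0 = hash :: ((List.range (δ (p 0) + 1)).flatMap
          (fun r => [ww (p 0), vv (c (p 0) (ek 0 + r))])) := rfl
      have hδ0 : δ (p 0) + 1 = (δ (p 0)) + 1 := rfl
      rw [hbe, List.range_succ_eq_map, List.flatMap_cons]
      refine ⟨[], (vv (c (p 0) (ek 0 + 0)) :: ((List.map Nat.succ (List.range (δ (p 0)))).flatMap
        (fun r => [ww (p 0), vv (c (p 0) (ek 0 + r))]) ++ (REST 1 ++ [hash, dollar]))), ?_⟩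
      simp [hp0]
    · -- i ≥ 1 : use the end of the previous block
      have h1i : 1 ≤ i := by omega
      set k := K i with hk
      have hkn : k < n ∧ p k = i := ⟨(hK i hi).1, (hK i hi).2.1⟩
      have hk1 : 1 ≤ k := by
        by_contra hc
        have : k = 0 := by omega
        rw [this, hp0] at hkn
        omega
      set k' := k - 1 with hk'
      have hkk : k = k' + 1 := by omega
      have hk'lt : k' < n - 1 := by omega
      obtain ⟨X, hX⟩ := hQk k' hk'lt
      -- last element of blk k' is vv i
      have hbe : blk k' = hash :: ((List.range (δ (p k') + 1)).flatMap
          (fun r => [ww (p k'), vv (c (p k') (ek k' + r))])) := rfl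
      have hlast : c (p k') (ek k' + δ (p k')) = i := by
        rw [hper (p k') (hplt1 k' hk'lt) (ek k')]
        rw [(hek k' hk'lt).2, ← hkk]
        exact hkn.2
      have hsplit : blk k' = (hash :: ((List.range (δ (p k'))).flatMap
          (fun r => [ww (p k'), vv (c (p k') (ek k' + r))]) ++ [ww (p k')])) ++ [vv i] := by
        rw [hbe, List.range_succ, List.flatMap_append, List.flatMap_cons, hlast]
        simp
      by_cases hlast' : i = n - 1
      · -- end of string
        have hRk : REST (k'+1) = [] := by
          show (List.range' (k'+1) (n-1-(k'+1))).flatMap blk = []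
          have : k = n - 1 := by
            have := (hK i hi).2.2 (n-1) (by omega) (by rw [hpN, ← hlast'])
            omega
          have e : n - 1 - (k'+1) = 0 := by omega
          rw [e]
          simp
        rw [if_neg h0, if_pos hlast']
        refine ⟨X ++ (hash :: ((List.range (δ (p k'))).flatMap
          (fun r => [ww (p k'), vv (c (p k') (ek k' + r))]) ++ [ww (p k')])), [], ?_⟩
        rw [hX, hsplit, hRk]
        simp
      · -- middle: next block starts with hash, ww i
        have hklt : k < n - 1 := by
          have hpk2 := hkn.2
          by_contra hc
          have : k = n - 1 := by omega
          rw [this, hpN] at hpk2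
          omega
        have hbe2 : blk k = hash :: ((List.range (δ (p k) + 1)).flatMap
            (fun r => [ww (p k), vv (c (p k) (ek k + r))])) := rfl
        have hRk : REST (k'+1) = blk k ++ REST (k+1) := by
          rw [← hkk]
          exact hRESTstep k hklt
        rw [if_neg h0, if_neg hlast']
        refine ⟨X ++ (hash :: ((List.range (δ (p k'))).flatMap
          (fun r => [ww (p k'), vv (c (p k') (ek k' + r))]) ++ [ww (p k')])),
          (vv (c (p k) (ek k + 0)) :: ((List.map Nat.succ (List.range (δ (p k)))).flatMap
            (fun r => [ww (p k), vv (c (p k) (ek k + r))]))) ++ (REST (k+1) ++ [hash, dollar]), ?_⟩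
        rw [hX, hsplit, hRk, hbe2, List.range_succ_eq_map, List.flatMap_cons]
        simp [hkn.2]
  exact ⟨Q, hQlen, hCocc, fun i j hi hj => (hAB i j hi hj).1, fun i j hi hj => (hAB i j hi hj).2⟩

/-- Gallant et al. reduction: every common superstring of T has length at least
2m + 3n, and G has a Hamiltonian path from s = 0 to t = n − 1 iff T has a
common superstring of length exactly 2m + 3n. -/
theorem stmt_14 (n m : ℕ) (hn : 2 ≤ n)
    (δ : ℕ → ℕ) (c : ℕ → ℕ → ℕ)
    -- every node except t has out-degree greater than 1
    (hδ : ∀ i < n - 1, 2 ≤ δ i)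
    -- child indices are cyclic modulo δ(i)
    (hper : ∀ i < n - 1, ∀ j, c i (j + δ i) = c i j)
    -- children are nodes, s = 0 has no incoming edges, no self-loops
    (hrange : ∀ i < n - 1, ∀ j, c i j < n)
    (hins : ∀ i < n - 1, ∀ j, c i j ≠ 0)
    (hloop : ∀ i < n - 1, ∀ j, c i j ≠ i)
    -- the children of a node are pairwise distinct
    (hinj : ∀ i < n - 1, ∀ j < δ i, ∀ j' < δ i, c i j = c i j' → j = j')
    -- m is the number of edges
    (hm : m = ∑ i ∈ Finset.range (n - 1), δ i) :
    let A : ℕ → ℕ → List Gam := fun i j => [ww i, vv (c i j), ww i]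
    let B : ℕ → ℕ → List Gam := fun i j => [vv (c i j), ww i, vv (c i (j + 1))]
    let Cs : ℕ → List Gam := fun i =>
      if i = 0 then [dag, hash, ww 0]
      else if i = n - 1 then [vv i, hash, dollar]
      else [vv i, hash, ww i]
    let T : Set (List Gam) :=
      {S | (∃ i < n, S = Cs i) ∨ (∃ i < n - 1, ∃ j < δ i, S = A i j ∨ S = B i j)}
    -- every common superstring of T has length at least 2m + 3n
    (∀ Q : List Gam, (∀ S ∈ T, S <:+: Q) → 2 * m + 3 * n ≤ Q.length) ∧
    -- Hamiltonian path from s to t exists iff a superstring of length 2m + 3n exists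
    ((∃ p : ℕ → ℕ, (∀ x < n, ∃! k, k < n ∧ p k = x) ∧ p 0 = 0 ∧ p (n - 1) = n - 1 ∧
        ∀ k < n - 1, ∃ j < δ (p k), c (p k) j = p (k + 1)) ↔
      (∃ Q : List Gam, Q.length = 2 * m + 3 * n ∧ ∀ S ∈ T, S <:+: Q)) := by
  intro A B Cs T
  -- convert membership hypotheses into concrete occurrence statements
  have toC : ∀ Q : List Gam, (∀ S ∈ T, S <:+: Q) → ∀ i, i < n → ∃ p,
      Q[p]? = some (if i = 0 then dag else vv i) ∧ Q[p+1]? = some hash ∧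
      Q[p+2]? = some (if i = n - 1 then dollar else ww i) := by
    intro Q hQ i hi
    have hmem : Cs i ∈ T := Or.inl ⟨i, hi, rfl⟩
    have hinf := hQ _ hmem
    by_cases h0 : i = 0
    · subst h0
      have e : Cs 0 = [dag, hash, ww 0] := if_pos rfl
      rw [e] at hinf
      obtain ⟨p, h1, h2, h3⟩ := infix3.mp hinf
      exact ⟨p, by rw [if_pos rfl]; exact h1, h2, by rw [if_neg (by omega)]; exact h3⟩
    · by_cases h1 : i = n - 1
      · have e : Cs i = [vv i, hash, dollar] := by
          show (if i = 0 then _ else if i = n - 1 then _ else _) = _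
          rw [if_neg h0, if_pos h1]
        rw [e] at hinf
        obtain ⟨p, e1, e2, e3⟩ := infix3.mp hinf
        exact ⟨p, by rw [if_neg h0]; exact e1, e2, by rw [if_pos h1]; exact e3⟩
      · have e : Cs i = [vv i, hash, ww i] := by
          show (if i = 0 then _ else if i = n - 1 then _ else _) = _
          rw [if_neg h0, if_neg h1]
        rw [e] at hinf
        obtain ⟨p, e1, e2, e3⟩ := infix3.mp hinf
        exact ⟨p, by rw [if_neg h0]; exact e1, e2, by rw [if_neg h1]; exact e3⟩
  have toA : ∀ Q : List Gam, (∀ S ∈ T, S <:+: Q) → ∀ i j, i < n - 1 → j < δ i → ∃ p,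
      Q[p]? = some (ww i) ∧ Q[p+1]? = some (vv (c i j)) ∧ Q[p+2]? = some (ww i) := by
    intro Q hQ i j hi hj
    exact infix3.mp (hQ _ (Or.inr ⟨i, hi, j, hj, Or.inl rfl⟩))
  have toB : ∀ Q : List Gam, (∀ S ∈ T, S <:+: Q) → ∀ i j, i < n - 1 → j < δ i → ∃ p,
      Q[p]? = some (vv (c i j)) ∧ Q[p+1]? = some (ww i) ∧ Q[p+2]? = some (vv (c i (j+1))) := by
    intro Q hQ i j hi hj
    exact infix3.mp (hQ _ (Or.inr ⟨i, hi, j, hj, Or.inr rfl⟩))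
  constructor
  · intro Q hQ
    exact (extract n m hn δ c hδ hper hinj hm Q (toC Q hQ) (toA Q hQ) (toB Q hQ)).1
  · constructor
    · rintro ⟨p, hp1, hp2, hp3, hp4⟩
      obtain ⟨Q, hQlen, hQC, hQA, hQB⟩ :=
        construct n m hn δ c hδ hper hm p hp1 hp2 hp3 hp4
      refine ⟨Q, hQlen, ?_⟩
      rintro S (⟨i, hi, rfl⟩ | ⟨i, hi, j, hj, (rfl | rfl)⟩)
      · have h := hQC i hi
        by_cases h0 : i = 0
        · subst h0
          have e : Cs 0 = [dag, hash, ww 0] := if_pos rfl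
          rw [e]
          rw [if_pos rfl, if_neg (by omega)] at h
          exact h
        · by_cases h1 : i = n - 1
          · have e : Cs i = [vv i, hash, dollar] := by
              show (if i = 0 then _ else if i = n - 1 then _ else _) = _
              rw [if_neg h0, if_pos h1]
            rw [e]
            rw [if_neg h0, if_pos h1] at h
            exact h
          · have e : Cs i = [vv i, hash, ww i] := by
              show (if i = 0 then _ else if i = n - 1 then _ else _) = _
              rw [if_neg h0, if_neg h1]
            rw [e]
            rw [if_neg h0, if_neg h1] at h
            exact h
      · exact hQA i j hi hj
      · exact hQB i j hi hj
    · rintro ⟨Q, hQlen, hQ⟩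
      exact (extract n m hn δ c hδ hper hinj hm Q
        (toC Q hQ) (toA Q hQ) (toB Q hQ)).2 hQlen
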